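/- arXiv:1511.02322 — 3 statements merged into one kernel-verified Lean document; each statement's English description precedes it below -/
import Mathlib

section
/- Suppose r ∈ {4,6}, ω is a root of unity in the algebraic closure of ℚ of order t, ζ_r a primitive r-th root of unity, and ω(1+ζ_r) lies in an imaginary quadratic field M. If r = 4, then M = ℚ(√-1) or M = ℚ(√-2); if r = 6, then M = ℚ(√-3). -/
open Complex Polynomial IntermediateField

lemma aux_nsq2 : ¬ IsSquare (2:ℕ) := by
  rintro ⟨r, hr⟩
  have : r ≤ 2 := by nlinarith
  interval_cases r <;> omega

lemma aux_nsq3 : ¬ IsSquare (3:ℕ) := by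
  rintro ⟨r, hr⟩
  have : r ≤ 3 := by nlinarith
  interval_cases r <;> omega

lemma aux_nsq6 : ¬ IsSquare (6:ℕ) := by
  rintro ⟨r, hr⟩
  have : r ≤ 6 := by nlinarith
  interval_cases r <;> omega

lemma aux_not_sq (n : ℕ) (hn : ¬ IsSquare n) (q : ℚ) : q^2 ≠ (n:ℚ) := by
  intro h
  exact hn (Rat.isSquare_natCast_iff.mp ⟨q, by rw [← h]; ring⟩)

lemma aux_dep3 (M : IntermediateField ℚ ℂ) (hM2 : Module.finrank ℚ M = 2)
    (a b c : ℂ) (ha : a ∈ M) (hb : b ∈ M) (hc : c ∈ M) :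
    ∃ x y z : ℚ, (x:ℂ) * a + (y:ℂ) * b + (z:ℂ) * c = 0 ∧ ¬(x = 0 ∧ y = 0 ∧ z = 0) := by
  have hf : Module.Finite ℚ M := Module.finite_of_finrank_pos (by omega)
  by_cases h : LinearIndependent ℚ ![(⟨a, ha⟩ : M), ⟨b, hb⟩, ⟨c, hc⟩]
  · have := h.fintype_card_le_finrank
    rw [hM2] at this
    simp at this
  · rw [Fintype.not_linearIndependent_iff] at h
    obtain ⟨g, hg, i, hi⟩ := h
    refine ⟨g 0, g 1, g 2, ?_, ?_⟩
    · have h2 : ((∑ i, g i • ![(⟨a, ha⟩ : M), ⟨b, hb⟩, ⟨c, hc⟩] i : M) : ℂ) = 0 := by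
        rw [hg]; rfl
      rw [Fin.sum_univ_three] at h2
      push_cast at h2
      simpa [Rat.smul_def] using h2
    · rintro ⟨h0, h1', h2'⟩
      fin_cases i <;> simp_all

lemma aux_eq_adjoin (M : IntermediateField ℚ ℂ) (hM2 : Module.finrank ℚ M = 2)
    (g : ℂ) (hg : g ∈ M) (c : ℚ) (hc : c < 0) (hgsq : g ^ 2 = (c : ℂ)) :
    M = IntermediateField.adjoin ℚ {g} := by
  have hint : IsIntegral ℚ g :=
    ⟨X^2 - C c, monic_X_pow_sub_C c (by norm_num), by simp [hgsq]⟩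
  have hirr : Irreducible (X^2 - C c : ℚ[X]) := by
    apply X_pow_sub_C_irreducible_of_prime Nat.prime_two
    intro b hb
    nlinarith [sq_nonneg b]
  have hmin : minpoly ℚ g = X^2 - C c := by
    symm
    apply minpoly.eq_of_irreducible_of_monic hirr ?_ (monic_X_pow_sub_C c (by norm_num))
    simp [hgsq]
  have hfr : Module.finrank ℚ (adjoin ℚ {g}) = 2 := by
    rw [adjoin.finrank hint, hmin, natDegree_X_pow_sub_C]
  have hfd : FiniteDimensional ℚ M := Module.finite_of_finrank_pos (by omega)
  exact (IntermediateField.eq_of_le_of_finrank_eq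
    (adjoin_le_iff.mpr (Set.singleton_subset_iff.mpr hg)) (by rw [hfr, hM2])).symm

lemma aux_gen (M : IntermediateField ℚ ℂ) (g : ℂ) (hgM : g ∈ M) (hre : g.re = 0)
    (k : ℚ) (hk : 0 < k) (d : ℝ) (him : g.im^2 = (k:ℝ)^2 * d) :
    Complex.I * (Real.sqrt d : ℂ) ∈ M := by
  have hd : 0 ≤ d := by
    by_contra hdn
    push_neg at hdn
    have hk2 : (0:ℝ) < (k:ℝ)^2 := by positivity
    nlinarith [sq_nonneg g.im]
  have habs : |g.im| = (k:ℝ) * Real.sqrt d := by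
    rw [← Real.sqrt_sq_eq_abs, him]
    rw [Real.sqrt_mul (by positivity), Real.sqrt_sq (by positivity)]
  have hkM : ((k:ℚ):ℂ) ∈ M := by
    have := IntermediateField.algebraMap_mem M k
    rwa [eq_ratCast] at this
  have hkne : ((k:ℚ):ℂ) ≠ 0 := by
    simp only [ne_eq, Rat.cast_eq_zero]
    exact hk.ne'
  rcases (abs_eq (by positivity)).mp habs with h | h
  · have hg' : ((k:ℚ):ℂ) * (Complex.I * (Real.sqrt d : ℂ)) = g := by
      apply Complex.ext <;> simp [hre, h]
    have : Complex.I * (Real.sqrt d : ℂ) = ((k:ℚ):ℂ)⁻¹ * g := by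
      rw [← hg']; field_simp
    rw [this]
    exact M.mul_mem (M.inv_mem hkM) hgM
  · have hg' : ((k:ℚ):ℂ) * (Complex.I * (Real.sqrt d : ℂ)) = -g := by
      apply Complex.ext <;> simp [hre, h]
    have : Complex.I * (Real.sqrt d : ℂ) = ((k:ℚ):ℂ)⁻¹ * (-g) := by
      rw [← hg']; field_simp
    rw [this]
    exact M.mul_mem (M.inv_mem hkM) (M.neg_mem hgM)

lemma aux_Isq (d : ℝ) (hd : 0 ≤ d) :
    (Complex.I * (Real.sqrt d : ℂ))^2 = ((-d : ℝ):ℂ) := by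
  rw [mul_pow, Complex.I_sq, ← Complex.ofReal_pow, Real.sq_sqrt hd]
  push_cast
  ring

lemma aux_core (c : ℚ) (hc : c = 2 ∨ c = 3)
    (α u : ℂ) (n : ℕ) (hn : 0 < n) (hu : u ^ n = 1)
    (hα : α ^ 2 = (c:ℂ) * u)
    (M : IntermediateField ℚ ℂ) (hM2 : Module.finrank ℚ M = 2)
    (hMim : ∃ z : M, (z : ℂ).im ≠ 0)
    (hmem : α ∈ M) :
    (c = 2 → M = adjoin ℚ {Complex.I} ∨ M = adjoin ℚ {Complex.I * (Real.sqrt 2 : ℂ)}) ∧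
    (c = 3 → M = adjoin ℚ {Complex.I * (Real.sqrt 3 : ℂ)}) := by
  have hc0 : (0:ℚ) < c := by rcases hc with h | h <;> rw [h] <;> norm_num
  have hcq0 : c ≠ 0 := hc0.ne'
  have hcne : (c:ℂ) ≠ 0 := by exact_mod_cast hcq0
  have huabs : ‖u‖ = 1 := Complex.norm_eq_one_of_pow_eq_one hu hn.ne'
  have hnsq : Complex.normSq α = (c:ℝ) := by
    have h1 : ‖α‖^2 = ‖α^2‖ := by rw [norm_pow]
    have h2 : (c:ℂ) = ((c:ℝ):ℂ) := by push_cast; ring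
    have h3 : (0:ℝ) ≤ (c:ℝ) := by exact_mod_cast hc0.le
    rw [hα, norm_mul, huabs, mul_one, h2, Complex.norm_real, Real.norm_eq_abs, _root_.abs_of_nonneg h3] at h1
    rw [← Complex.sq_norm, h1]
  -- α is not rational
  have hratα : ∀ q : ℚ, α ≠ (q:ℂ) := by
    intro q hq
    have h1 : ((q:ℂ))^2 = (c:ℂ) * u := by rw [← hq]; exact hα
    have h2 : u = ((q^2/c : ℚ):ℂ) := by
      push_cast
      field_simp
      linear_combination -h1
    have h3 : |q^2/c| = 1 := by
      have h4 := huabs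
      rw [h2] at h4
      have h5 : ((q^2/c : ℚ):ℂ) = (((q^2/c : ℚ):ℝ):ℂ) := by push_cast; ring
      rw [h5, Complex.norm_real, Real.norm_eq_abs] at h4
      exact_mod_cast h4
    have h6 : q^2 = c := by
      rcases (abs_eq (by norm_num : (0:ℚ) ≤ 1)).mp h3 with h | h
      · field_simp at h; linarith
      · field_simp at h
        nlinarith [sq_nonneg q]
    rcases hc with h | h <;> rw [h] at h6
    · exact aux_not_sq 2 aux_nsq2 q (by exact_mod_cast h6)
    · exact aux_not_sq 3 aux_nsq3 q (by exact_mod_cast h6)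
  -- α has nonzero imaginary part
  have him : α.im ≠ 0 := by
    intro him0
    obtain ⟨z0, hz0⟩ := hMim
    obtain ⟨x, y, w, heq, hne⟩ := aux_dep3 M hM2 1 α z0 (one_mem M) hmem z0.2
    have himeq := congrArg Complex.im heq
    simp only [Complex.add_im, Complex.mul_im, Complex.one_im, Complex.one_re,
      Complex.ratCast_im, Complex.ratCast_re, Complex.zero_im, him0, mul_zero, zero_mul,
      add_zero, zero_add, mul_one] at himeq
    have hw : w = 0 := by
      by_contra hw0
      have hwR : ((w:ℝ)) ≠ 0 := by exact_mod_cast hw0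
      exact hz0 ((mul_eq_zero.mp himeq).resolve_left hwR)
    subst hw
    simp only [Rat.cast_zero, zero_mul, add_zero, mul_one] at heq
    by_cases hy : y = 0
    · subst hy
      simp only [Rat.cast_zero, zero_mul, add_zero] at heq
      exact hne ⟨by exact_mod_cast heq, rfl, rfl⟩
    · apply hratα (-x/y)
      have hyC : ((y:ℂ)) ≠ 0 := by exact_mod_cast hy
      push_cast
      rw [eq_div_iff hyC]
      linear_combination heq
  -- quadratic relation over ℚ
  obtain ⟨x, y, z, heq, hne⟩ := aux_dep3 M hM2 1 α (α^2)
    (one_mem M) hmem (pow_mem hmem 2)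
  have hz : z ≠ 0 := by
    intro hz0
    subst hz0
    simp only [Rat.cast_zero, zero_mul, add_zero, mul_one] at heq
    by_cases hy : y = 0
    · subst hy
      simp only [Rat.cast_zero, zero_mul, add_zero] at heq
      exact hne ⟨by exact_mod_cast heq, rfl, rfl⟩
    · apply hratα (-x/y)
      have hyC : ((y:ℂ)) ≠ 0 := by exact_mod_cast hy
      push_cast
      rw [eq_div_iff hyC]
      linear_combination heq
  have hzC : ((z:ℂ)) ≠ 0 := by exact_mod_cast hz
  set s : ℚ := -y/z with hs_def
  set b : ℚ := -x/z with hb_def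
  have hquad : α^2 = (s:ℂ) * α + (b:ℂ) := by
    have h' : α^2 = (-(y:ℂ)*α + -(x:ℂ))/(z:ℂ) := by
      rw [eq_div_iff hzC]
      linear_combination heq
    rw [hs_def, hb_def]
    push_cast
    rw [h']
    ring
  have hconj : (starRingEnd ℂ) α ^ 2 = (s:ℂ) * (starRingEnd ℂ) α + (b:ℂ) := by
    have h := congrArg (starRingEnd ℂ) hquad
    simpa using h
  have hdiff : α - (starRingEnd ℂ) α ≠ 0 := by
    rw [Complex.sub_conj]
    simp [Complex.ext_iff, him]
  have htr : α + (starRingEnd ℂ) α = (s:ℂ) := by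
    have h0 : (α - (starRingEnd ℂ) α) * (α + (starRingEnd ℂ) α - (s:ℂ)) = 0 := by
      linear_combination hquad - hconj
    rcases mul_eq_zero.mp h0 with h | h
    · exact absurd h hdiff
    · linear_combination h
  have hmc : α * (starRingEnd ℂ) α = (c:ℂ) := by
    rw [Complex.mul_conj, hnsq]
    push_cast
    ring
  have hbc : (b:ℂ) = -(c:ℂ) := by
    linear_combination α * htr - hquad - hmc
  -- u + conj u is a rational integer
  have h2 : ((starRingEnd ℂ) α)^2 = (c:ℂ) * (starRingEnd ℂ) u := by
    have h := congrArg (starRingEnd ℂ) hα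
    simpa using h
  have huconj : ((s^2/c - 2 : ℚ):ℂ) = u + (starRingEnd ℂ) u := by
    push_cast
    field_simp
    linear_combination hα + h2 + 2*hmc - (α + (starRingEnd ℂ) α + (s:ℂ)) * htr
  have hiu : IsIntegral ℤ u := ⟨X^n - C 1, monic_X_pow_sub_C 1 hn.ne', by simp [hu]⟩
  have hicu : IsIntegral ℤ ((starRingEnd ℂ) u) := by
    refine ⟨X^n - C 1, monic_X_pow_sub_C 1 hn.ne', ?_⟩
    have : ((starRingEnd ℂ) u)^n = 1 := by rw [← map_pow, hu, map_one]
    simp [this]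
  have hsum : IsIntegral ℤ ((s^2/c - 2 : ℚ):ℂ) := by
    rw [huconj]; exact hiu.add hicu
  have hq_int : IsIntegral ℤ (s^2/c - 2 : ℚ) := by
    have he : algebraMap ℚ ℂ (s^2/c - 2 : ℚ) = ((s^2/c - 2 : ℚ):ℂ) := eq_ratCast _ _
    rw [← he] at hsum
    exact (isIntegral_algebraMap_iff (algebraMap ℚ ℂ).injective).mp hsum
  obtain ⟨m, hm⟩ := IsIntegrallyClosed.isIntegral_iff.mp hq_int
  have hmq : (m:ℚ) = s^2/c - 2 := by rw [← hm]; simp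
  -- bound on m
  have hqre : (((s^2/c - 2 : ℚ):ℝ)) = 2 * u.re := by
    have h4 : u + (starRingEnd ℂ) u = ((2*u.re : ℝ):ℂ) := Complex.add_conj u
    rw [h4] at huconj
    exact_mod_cast huconj
  have hb2 : |((s^2/c - 2 : ℚ):ℝ)| ≤ 2 := by
    rw [hqre, abs_mul]
    have h5 := Complex.abs_re_le_norm u
    rw [huabs] at h5
    norm_num
    linarith
  have hmb : (-2:ℤ) ≤ m ∧ m ≤ 2 := by
    have h6 : |(m:ℚ)| ≤ 2 := by
      rw [hmq]
      have : |((s^2/c - 2 : ℚ):ℝ)| = ((|s^2/c - 2|:ℚ):ℝ) := by push_cast; ring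
      rw [this] at hb2
      exact_mod_cast hb2
    have := abs_le.mp h6
    constructor <;> [exact_mod_cast this.1; exact_mod_cast this.2]
  have hsq : s^2 = c*(m+2) := by
    have h7 : (m:ℚ) * c = s^2 - 2*c := by
      field_simp at hmq
      linarith
    linarith [h7]
  -- the element β
  set β : ℂ := 2*α - (s:ℂ) with hβdef
  have hsM : ((s:ℚ):ℂ) ∈ M := by
    have := IntermediateField.algebraMap_mem M s
    rwa [eq_ratCast] at this
  have hβM : β ∈ M := by
    rw [hβdef, two_mul]
    exact M.sub_mem (M.add_mem hmem hmem) hsM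
  have hβ2' : β = α + α - (s:ℂ) := by rw [hβdef]; ring
  have hβre : β.re = 0 := by
    have h8 : α.re + α.re = (s:ℝ) := by
      simpa using congrArg Complex.re htr
    rw [hβ2']
    simp only [Complex.sub_re, Complex.add_re, Complex.ratCast_re]
    linarith
  have hβim : β.im = 2*α.im := by
    rw [hβ2']
    simp only [Complex.sub_im, Complex.add_im, Complex.ratCast_im]
    ring
  have hsqC : ((s:ℂ))^2 = (c:ℂ)*((m:ℂ)+2) := by exact_mod_cast congrArg (Rat.cast (K := ℂ)) hsq
  have hβsq : β^2 = (((c*(m-2) : ℚ)):ℂ) := by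
    rw [hβdef]
    push_cast
    push_cast at hsqC
    linear_combination 4*hquad + 4*hbc + hsqC
  have hβim2 : (β.im)^2 = ((c*(2-m) : ℚ):ℝ) := by
    have h9 := congrArg Complex.re hβsq
    have h10 : (β^2).re = -(β.im)^2 := by
      rw [pow_two, Complex.mul_re, hβre]
      ring
    rw [h10] at h9
    have h11 : ((c*((m:ℚ)-2) : ℚ):ℝ) = (((c*((m:ℚ)-2) : ℚ)):ℂ).re := by
      simp
    push_cast at h9 h11 ⊢
    linarith [h9]
  clear hβsq hsqC hquad hconj htr hmc hbc huconj hiu hicu hsum hq_int hmq hqre hb2 heq hα h2 hnsq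
  obtain ⟨hm1, hm2⟩ := hmb
  interval_cases m
  -- m = -2
  · push_cast at hsq hβim2
    refine ⟨fun hc2 => ?_, fun hc3 => ?_⟩
    · subst hc2
      norm_num at hβim2
      have hgen : Complex.I * (Real.sqrt 2 : ℂ) ∈ M :=
        aux_gen M β hβM hβre 2 (by norm_num) 2 (by push_cast; linarith)
      refine Or.inr (aux_eq_adjoin M hM2 _ hgen (-2) (by norm_num) ?_)
      rw [aux_Isq 2 (by norm_num)]
      push_cast; ring
    · subst hc3
      norm_num at hβim2
      have hgen : Complex.I * (Real.sqrt 3 : ℂ) ∈ M :=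
        aux_gen M β hβM hβre 2 (by norm_num) 3 (by push_cast; linarith)
      refine aux_eq_adjoin M hM2 _ hgen (-3) (by norm_num) ?_
      rw [aux_Isq 3 (by norm_num)]
      push_cast; ring
  -- m = -1
  · push_cast at hsq
    norm_num at hsq
    exfalso
    rcases hc with h | h <;> rw [h] at hsq
    · exact aux_not_sq 2 aux_nsq2 s (by push_cast; linarith)
    · exact aux_not_sq 3 aux_nsq3 s (by push_cast; linarith)
  -- m = 0
  · push_cast at hsq hβim2
    norm_num at hsq hβim2
    refine ⟨fun hc2 => ?_, fun hc3 => ?_⟩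
    · subst hc2
      norm_num at hβim2
      have hgen : Complex.I * (Real.sqrt 1 : ℂ) ∈ M :=
        aux_gen M β hβM hβre 2 (by norm_num) 1 (by push_cast; linarith)
      rw [Real.sqrt_one] at hgen
      norm_num at hgen
      refine Or.inl (aux_eq_adjoin M hM2 _ hgen (-1) (by norm_num) ?_)
      rw [Complex.I_sq]
      push_cast; ring
    · subst hc3
      exfalso
      exact aux_not_sq 6 aux_nsq6 s (by push_cast; linarith)
  -- m = 1
  · push_cast at hsq hβim2
    norm_num at hsq hβim2
    refine ⟨fun hc2 => ?_, fun hc3 => ?_⟩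
    · subst hc2
      exfalso
      exact aux_not_sq 6 aux_nsq6 s (by push_cast; linarith)
    · subst hc3
      norm_num at hβim2
      have hgen : Complex.I * (Real.sqrt 3 : ℂ) ∈ M :=
        aux_gen M β hβM hβre 1 (by norm_num) 3 (by push_cast; linarith)
      refine aux_eq_adjoin M hM2 _ hgen (-3) (by norm_num) ?_
      rw [aux_Isq 3 (by norm_num)]
      push_cast; ring
  -- m = 2
  · exfalso
    push_cast at hβim2
    norm_num at hβim2
    have hβ0 : β.im = 0 := by nlinarith [sq_nonneg β.im]
    rw [hβim] at hβ0
    exact him (by linarith)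

/-- Let `r ∈ {4,6}`, let `ζ` be a primitive `r`-th root of unity in `ℂ`, let `ω`
be a root of unity (of some order `t`), and suppose `ω(1+ζ)` lies in an imaginary
quadratic field `M ⊆ ℂ`. If `r = 4` then `M = ℚ(√-1)` or `M = ℚ(√-2)`; if `r = 6`
then `M = ℚ(√-3)`. -/
theorem statement2 (r t : ℕ) (hr : r = 4 ∨ r = 6) (ht : 0 < t)
    (ζ ω : ℂ) (hζ : IsPrimitiveRoot ζ r) (hω : IsPrimitiveRoot ω t)
    (M : IntermediateField ℚ ℂ) (hM2 : Module.finrank ℚ M = 2)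
    (hMim : ∃ z : M, (z : ℂ).im ≠ 0)
    (hmem : ω * (1 + ζ) ∈ M) :
    (r = 4 → M = IntermediateField.adjoin ℚ {Complex.I} ∨
      M = IntermediateField.adjoin ℚ {Complex.I * (Real.sqrt 2 : ℂ)}) ∧
    (r = 6 → M = IntermediateField.adjoin ℚ {Complex.I * (Real.sqrt 3 : ℂ)}) := by
  have hωt : ω ^ t = 1 := hω.pow_eq_one
  rcases hr with h4 | h6
  · subst h4
    have hζ4 : ζ ^ 4 = 1 := hζ.pow_eq_one
    have hζ2 : ζ ^ 2 = -1 := by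
      have hne : ζ ^ 2 ≠ 1 := hζ.pow_ne_one_of_pos_of_lt (by norm_num) (by norm_num)
      have h0 : (ζ^2 - 1) * (ζ^2 + 1) = 0 := by linear_combination hζ4
      rcases mul_eq_zero.mp h0 with h | h
      · exact absurd (by linear_combination h) hne
      · linear_combination h
    have hα : (ω * (1+ζ))^2 = ((2:ℚ):ℂ) * (ζ * ω^2) := by
      push_cast
      linear_combination ω^2 * hζ2
    have hu : (ζ * ω^2)^(4*t) = 1 := by
      have e1 : (ζ * ω^2)^(4*t) = (ζ^4)^t * (ω^t)^8 := by ring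
      rw [e1, hζ4, hωt, one_pow, one_pow, one_mul]
    have hres := aux_core 2 (Or.inl rfl) (ω*(1+ζ)) (ζ*ω^2) (4*t) (by omega) hu hα M hM2 hMim hmem
    exact ⟨fun _ => hres.1 rfl, fun h => by omega⟩
  · subst h6
    have hζ6 : ζ ^ 6 = 1 := hζ.pow_eq_one
    have hζ3 : ζ ^ 3 = -1 := by
      have hne : ζ ^ 3 ≠ 1 := hζ.pow_ne_one_of_pos_of_lt (by norm_num) (by norm_num)
      have h0 : (ζ^3 - 1) * (ζ^3 + 1) = 0 := by linear_combination hζ6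
      rcases mul_eq_zero.mp h0 with h | h
      · exact absurd (by linear_combination h) hne
      · linear_combination h
    have hζne : ζ ≠ -1 := by
      intro h
      have hne : ζ ^ 2 ≠ 1 := hζ.pow_ne_one_of_pos_of_lt (by norm_num) (by norm_num)
      rw [h] at hne
      norm_num at hne
    have hζ2 : ζ ^ 2 = ζ - 1 := by
      have h0 : (ζ + 1) * (ζ^2 - ζ + 1) = 0 := by linear_combination hζ3
      rcases mul_eq_zero.mp h0 with h | h
      · exact absurd (by linear_combination h) hζne
      · linear_combination h
    have hα : (ω * (1+ζ))^2 = ((3:ℚ):ℂ) * (ζ * ω^2) := by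
      push_cast
      linear_combination ω^2 * hζ2
    have hu : (ζ * ω^2)^(6*t) = 1 := by
      have e1 : (ζ * ω^2)^(6*t) = (ζ^6)^t * (ω^t)^12 := by ring
      rw [e1, hζ6, hωt, one_pow, one_pow, one_mul]
    have hres := aux_core 3 (Or.inr rfl) (ω*(1+ζ)) (ζ*ω^2) (6*t) (by omega) hu hα M hM2 hMim hmem
    exact ⟨fun h => by omega, fun _ => hres.2 rfl⟩
end

section
/- Let ρ be any faithful 2-dimensional complex representation of GL₂(ℤ/3ℤ). Then for any element g ∈ GL₂(ℤ/3ℤ) of order 8, the trace of ρ(g) does not lie in ℚ. -/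
open Matrix

/-- Cayley–Hamilton for `2 × 2` complex matrices. -/
lemma GL23aux_sq_eq_trace_det (A : Matrix (Fin 2) (Fin 2) ℂ) :
    A ^ 2 = (Matrix.trace A) • A - (Matrix.det A) • 1 := by
  rw [pow_two, Matrix.trace_fin_two, Matrix.det_fin_two]
  ext i j
  fin_cases i <;> fin_cases j <;>
    simp [Matrix.mul_apply, Fin.sum_univ_two, Matrix.one_apply] <;> ring

lemma GL23aux_step_sq (A : Matrix (Fin 2) (Fin 2) ℂ) (x y u v : ℂ)
    (h2 : A ^ 2 = x • A - y • 1) :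
    (u • A + v • 1) ^ 2 = (u ^ 2 * x + 2 * u * v) • A + (v ^ 2 - u ^ 2 * y) • 1 := by
  have e : (u • A + v • 1) ^ 2 = (u * u) • (A * A) + (2 * (u * v)) • A + (v * v) • 1 := by
    rw [pow_two]
    simp only [add_mul, mul_add, smul_mul_assoc, mul_smul_comm, smul_smul, mul_one, one_mul]
    module
  rw [e, show A * A = A ^ 2 from (sq A).symm, h2]
  module

def GL23aux_E : GL (Fin 2) (ZMod 3) :=
  ⟨!![1, 1; 0, 1], !![1, -1; 0, 1], by decide, by decide⟩

def GL23aux_F : GL (Fin 2) (ZMod 3) :=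
  ⟨!![1, 0; 1, 1], !![1, 0; -1, 1], by decide, by decide⟩

/-- A central element of `GL₂(ℤ/3ℤ)` squares to `1`. -/
lemma GL23aux_central_sq (z : GL (Fin 2) (ZMod 3))
    (hz : ∀ w : GL (Fin 2) (ZMod 3), z * w = w * z) : z ^ 2 = 1 := by
  set M : Matrix (Fin 2) (Fin 2) (ZMod 3) := z.val with hM
  have hE : M * GL23aux_E.val = GL23aux_E.val * M := congrArg Units.val (hz GL23aux_E)
  have hF : M * GL23aux_F.val = GL23aux_F.val * M := congrArg Units.val (hz GL23aux_F)
  have h10 : M 1 0 = 0 := by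
    have := congrFun (congrFun hE 0) 0
    simpa [GL23aux_E, Matrix.mul_apply, Fin.sum_univ_two] using this.symm
  have h01 : M 0 1 = 0 := by
    have := congrFun (congrFun hF 0) 0
    simpa [GL23aux_F, Matrix.mul_apply, Fin.sum_univ_two] using this.symm
  have hdiag : M 0 0 = M 1 1 := by
    have := congrFun (congrFun hE 0) 1
    simp [GL23aux_E, Matrix.mul_apply, Fin.sum_univ_two, h01] at this
    exact this
  have hne : M 0 0 ≠ 0 := by
    intro h0
    have hMinv : M * (z⁻¹).val = 1 := by
      rw [hM, ← Units.val_mul, mul_inv_cancel, Units.val_one]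
    have := congrFun (congrFun hMinv 0) 0
    simp [Matrix.mul_apply, Fin.sum_univ_two, h0, h01] at this
  have hsq : M 0 0 * M 0 0 = 1 := by
    revert hne; generalize M 0 0 = a; revert a; decide
  apply Units.ext
  rw [Units.val_pow_eq_pow_val, Units.val_one, pow_two, ← hM]
  ext i j
  fin_cases i <;> fin_cases j <;>
    simp [Matrix.mul_apply, Fin.sum_univ_two, Matrix.one_apply, h01, h10, ← hdiag, hsq]

/-- If `ρ x` is a scalar matrix and `ρ` is injective, then `x` is central. -/
lemma GL23aux_comm_of_scalar (ρ : GL (Fin 2) (ZMod 3) →* GL (Fin 2) ℂ)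
    (hρ : Function.Injective ρ) (x : GL (Fin 2) (ZMod 3)) (c : ℂ)
    (hx : (ρ x).val = c • (1 : Matrix (Fin 2) (Fin 2) ℂ)) :
    ∀ w : GL (Fin 2) (ZMod 3), x * w = w * x := by
  intro w
  apply hρ
  rw [_root_.map_mul, _root_.map_mul]
  apply Units.ext
  rw [Units.val_mul, Units.val_mul, hx, smul_mul_assoc, one_mul, mul_smul_comm, mul_one]

lemma GL23aux_no_rat_sq_two (q : ℚ) (h : q ^ 2 = 2) : False := by
  have h' : ((q : ℝ)) ^ 2 = 2 := by exact_mod_cast h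
  refine irrational_sqrt_two ⟨|q|, ?_⟩
  rw [← h', Real.sqrt_sq_eq_abs]
  push_cast
  rfl

/-- For any faithful 2-dimensional complex representation `ρ` of `GL₂(ℤ/3ℤ)` and
any element `g` of order 8, the trace of `ρ g` is irrational. -/
theorem statement8 (ρ : GL (Fin 2) (ZMod 3) →* GL (Fin 2) ℂ)
    (hρ : Function.Injective ρ)
    (g : GL (Fin 2) (ZMod 3)) (hg : orderOf g = 8) :
    ∀ q : ℚ, Matrix.trace ((ρ g : GL (Fin 2) ℂ) : Matrix (Fin 2) (Fin 2) ℂ) ≠ (q : ℂ) := by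
  intro q hq
  set A : Matrix (Fin 2) (Fin 2) ℂ := ((ρ g : GL (Fin 2) ℂ) : Matrix (Fin 2) (Fin 2) ℂ) with hA
  set d : ℂ := Matrix.det A with hd
  have hordA : orderOf (ρ g) = 8 := by rw [orderOf_injective ρ hρ, hg]
  have hA8 : A ^ 8 = 1 := by
    have h := pow_orderOf_eq_one (ρ g)
    rw [hordA] at h
    calc A ^ 8 = ((ρ g ^ 8 : GL (Fin 2) ℂ) : Matrix (Fin 2) (Fin 2) ℂ) :=
          (Units.val_pow_eq_pow_val _ _).symm
      _ = 1 := by rw [h, Units.val_one]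
  have hA2 : A ^ 2 = (q : ℂ) • A - d • 1 := by
    rw [GL23aux_sq_eq_trace_det, hq, hd]
  -- helper to contradict the order of g
  have horder : ∀ n : ℕ, 0 < n → n < 8 → g ^ n ≠ 1 := by
    intro n hn hn8 h1
    have := Nat.le_of_dvd hn (hg ▸ orderOf_dvd_of_pow_eq_one h1)
    omega
  by_cases hq0 : q = 0
  · -- trace zero: ρ (g^2) is scalar, so g^2 is central, so g^4 = 1, contradiction
    have hA2' : A ^ 2 = (-d) • 1 := by
      rw [hA2, hq0]; push_cast; rw [zero_smul, zero_sub, neg_smul]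
    have hval : (ρ (g ^ 2)).val = (-d) • (1 : Matrix (Fin 2) (Fin 2) ℂ) := by
      rw [map_pow, Units.val_pow_eq_pow_val, ← hA, hA2']
    have hcomm := GL23aux_comm_of_scalar ρ hρ (g ^ 2) (-d) hval
    have h4 : g ^ 4 = 1 := by
      have := GL23aux_central_sq (g ^ 2) hcomm
      rwa [← pow_mul] at this
    exact horder 4 (by norm_num) (by norm_num) h4
  · by_cases hs : ∃ c : ℂ, A = c • (1 : Matrix (Fin 2) (Fin 2) ℂ)
    · -- ρ g scalar: g central, g^2 = 1, contradiction
      obtain ⟨c, hc⟩ := hs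
      have hcomm := GL23aux_comm_of_scalar ρ hρ g c (by rw [← hA, hc])
      exact horder 2 (by norm_num) (by norm_num) (GL23aux_central_sq g hcomm)
    · -- independence of A and 1
      have hindep : ∀ x y : ℂ, x • A + y • 1 = 0 → x = 0 ∧ y = 0 := by
        intro x y h
        have hx : x = 0 := by
          by_contra hx
          refine hs ⟨x⁻¹ * (-y), ?_⟩
          have h' : x • A = (-y) • (1 : Matrix (Fin 2) (Fin 2) ℂ) := by
            rw [neg_smul]; exact eq_neg_of_add_eq_zero_left h
          have := congrArg (fun M => x⁻¹ • M) h'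
          simpa [smul_smul, inv_mul_cancel₀ hx] using this
        refine ⟨hx, ?_⟩
        rw [hx, zero_smul, zero_add] at h
        rcases smul_eq_zero.1 h with h' | h'
        · exact h'
        · exact absurd h' one_ne_zero
      -- compute A^4 and A^8 as linear combinations of A and 1
      have hA2'' : A ^ 2 = (q : ℂ) • A + (-d) • 1 := by rw [hA2, neg_smul, sub_eq_add_neg]
      have hA4 : A ^ 4 = ((q : ℂ) ^ 3 - 2 * q * d) • A + (d ^ 2 - (q : ℂ) ^ 2 * d) • 1 := by
        have e := GL23aux_step_sq A (q : ℂ) d (q : ℂ) (-d) hA2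
        rw [← hA2''] at e
        rw [show (4:ℕ) = 2*2 from rfl, pow_mul, e]
        module
      have hA8' : A ^ 8 =
          (((q : ℂ) ^ 3 - 2 * q * d) ^ 2 * q
              + 2 * ((q : ℂ) ^ 3 - 2 * q * d) * (d ^ 2 - (q : ℂ) ^ 2 * d)) • A
            + ((d ^ 2 - (q : ℂ) ^ 2 * d) ^ 2 - ((q : ℂ) ^ 3 - 2 * q * d) ^ 2 * d) • 1 := by
        have e := GL23aux_step_sq A (q : ℂ) d ((q : ℂ) ^ 3 - 2 * q * d)
          (d ^ 2 - (q : ℂ) ^ 2 * d) hA2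
        rw [← hA4] at e
        rw [show (8:ℕ) = 4*2 from rfl, pow_mul, e]
      -- extract scalar equations
      have hzero :
          (((q : ℂ) ^ 3 - 2 * q * d) ^ 2 * q
              + 2 * ((q : ℂ) ^ 3 - 2 * q * d) * (d ^ 2 - (q : ℂ) ^ 2 * d)) • A
            + ((d ^ 2 - (q : ℂ) ^ 2 * d) ^ 2 - ((q : ℂ) ^ 3 - 2 * q * d) ^ 2 * d - 1) • 1
            = 0 := by
        rw [sub_smul, one_smul, ← add_sub_assoc, ← hA8', hA8, sub_self]
      obtain ⟨E1, E2⟩ := hindep _ _ hzero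
      have E2' : (d ^ 2 - (q : ℂ) ^ 2 * d) ^ 2 - ((q : ℂ) ^ 3 - 2 * q * d) ^ 2 * d = 1 :=
        sub_eq_zero.1 E2
      have hqC : (q : ℂ) ≠ 0 := Rat.cast_ne_zero.mpr hq0
      have humul : ((q:ℂ)^3 - 2*q*d) * (((q:ℂ)^3 - 2*q*d)*q + 2*(d^2 - (q:ℂ)^2*d)) = 0 := by
        linear_combination E1
      rcases mul_eq_zero.1 humul with hu | huv
      · -- u = 0 : then q^2 = 2d and q^8 = 16, impossible for rational q
        have h2d : (q:ℂ)^2 = 2*d := by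
          have h' : (q:ℂ) * ((q:ℂ)^2 - 2*d) = 0 := by linear_combination hu
          rcases mul_eq_zero.1 h' with h | h
          · exact absurd h hqC
          · linear_combination h
        have hv2 : (d^2 - (q:ℂ)^2*d)^2 = 1 := by
          linear_combination E2' + d*((q:ℂ)^3 - 2*q*d)*hu
        have hq8 : (q:ℂ)^8 = 16 := by
          linear_combination 16*hv2 + ((q:ℂ)^2 - 2*d)*((q:ℂ)^4 + 4*(q:ℂ)^2*d - 4*d^2)*h2d
        have hq8' : q^8 = 16 := by exact_mod_cast hq8
        have h44 : (q^4 - 4)*(q^4 + 4) = 0 := by linear_combination hq8'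
        rcases mul_eq_zero.1 h44 with h | h
        · have h22 : (q^2 - 2)*(q^2 + 2) = 0 := by linear_combination h
          rcases mul_eq_zero.1 h22 with h' | h'
          · exact GL23aux_no_rat_sq_two q (by linear_combination h')
          · have hpos : (0:ℚ) < q^2 + 2 := by positivity
            linarith
        · have hpos : (0:ℚ) < q^4 + 4 := by positivity
          linarith
      · -- u*q + 2*v = 0 : eliminate d and get a positive rational equal to 0
        have h1 : 2*d^2 = 4*(q:ℂ)^2*d - (q:ℂ)^4 := by linear_combination huv
        have hdd : 6*(q:ℂ)^6*d = 7/4*(q:ℂ)^8 - 1 := by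
          linear_combination (1/2*d^2 - 2*(q:ℂ)^2*d - 7/4*(q:ℂ)^4) * h1 - E2'
        have hfin : 2*(q:ℂ)^16 + 272*(q:ℂ)^8 + 32 = 0 := by
          linear_combination (576*(q:ℂ)^12) * h1 + (328*(q:ℂ)^8 - 192*(q:ℂ)^6*d + 32) * hdd
        have hfin' : 2*q^16 + 272*q^8 + 32 = 0 := by exact_mod_cast hfin
        have hpos : (0:ℚ) < 2*q^16 + 272*q^8 + 32 := by positivity
        linarith
end

section
/- The quaternionic (faithful degree-2) representation of the quaternion group Q₈ is realizable over a field M of characteristic 0 if and only if the quaternion algebra (-1,-1)_M is split, i.e., isomorphic to M₂(M). -/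
open Matrix
open scoped Quaternion

namespace Q8Aux

variable {G : Type*} [Group G]

private def q8map (A X : G) : QuaternionGroup 2 → G
  | .a i => A ^ i.val
  | .xa i => X * A ^ i.val

variable {A X : G}

private lemma pow_val_add (hA : A ^ 4 = 1) (i j : ZMod (2 * 2)) :
    A ^ (i + j).val = A ^ i.val * A ^ j.val := by
  haveI : NeZero (2 * 2) := ⟨by norm_num⟩
  have hmod : ∀ m : ℕ, A ^ (m % (2 * 2)) = A ^ m := by
    intro m
    conv_rhs => rw [← Nat.div_add_mod m (2 * 2)]
    rw [pow_add, pow_mul]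
    norm_num [hA]
  rw [ZMod.val_add, hmod, pow_add]

private lemma pow_val_neg (hA : A ^ 4 = 1) (i : ZMod (2 * 2)) :
    A ^ (-i).val = (A ^ i.val)⁻¹ := by
  haveI : NeZero (2 * 2) := ⟨by norm_num⟩
  refine eq_inv_of_mul_eq_one_right ?_
  rw [← pow_val_add hA, add_neg_cancel]
  haveI : NeZero (2 * 2) := ⟨by norm_num⟩
  rw [ZMod.val_zero, pow_zero]

private lemma pow_mul_X (hc : A * X = X * A⁻¹) (m : ℕ) :
    A ^ m * X = X * (A ^ m)⁻¹ := by
  induction m with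
  | zero => simp
  | succ m ih =>
    rw [pow_succ, mul_assoc, hc, ← mul_assoc, ih, mul_assoc, ← _root_.mul_inv_rev, ← pow_succ', pow_succ]

/-- Lift of generators/relations to a group hom out of `QuaternionGroup 2`. -/
def q8hom (A X : G) (hA : A ^ 4 = 1) (hX : X ^ 2 = A ^ 2)
    (hc : A * X = X * A⁻¹) : QuaternionGroup 2 →* G where
  toFun := q8map A X
  map_one' := by
    show A ^ (0 : ZMod (2 * 2)).val = 1
    haveI : NeZero (2 * 2) := ⟨by norm_num⟩
    rw [ZMod.val_zero, pow_zero]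
  map_mul' := by
    have hcomm : ∀ m k : ℕ, (A ^ m)⁻¹ * A ^ k = A ^ k * (A ^ m)⁻¹ := fun m k =>
      (((Commute.refl A).pow_pow k m).inv_right).symm.eq
    rintro (i | i) (j | j)
    · exact pow_val_add hA i j
    · show X * A ^ (j - i).val = A ^ i.val * (X * A ^ j.val)
      rw [← mul_assoc, pow_mul_X hc, sub_eq_add_neg, mul_assoc, hcomm,
        ← pow_val_neg hA, ← pow_val_add hA]
    · show X * A ^ (i + j).val = X * A ^ i.val * A ^ j.val
      rw [pow_val_add hA, mul_assoc]
    · show A ^ (((2 : ℕ) : ZMod (2 * 2)) + j - i).val = X * A ^ i.val * (X * A ^ j.val)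
      have h2 : (((2 : ℕ) : ZMod (2 * 2))).val = 2 := by decide
      have key : X * A ^ i.val * (X * A ^ j.val) = A ^ 2 * (A ^ j.val * (A ^ i.val)⁻¹) := by
        rw [mul_assoc, ← mul_assoc (A ^ i.val), pow_mul_X hc, ← mul_assoc, ← mul_assoc,
          ← pow_two, hX, mul_assoc, hcomm]
      rw [key, sub_eq_add_neg, pow_val_add hA, pow_val_add hA, h2, pow_val_neg hA, mul_assoc]

@[simp] lemma q8hom_a (hA : A ^ 4 = 1) (hX : X ^ 2 = A ^ 2) (hc : A * X = X * A⁻¹)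
    (i : ZMod (2 * 2)) : q8hom A X hA hX hc (.a i) = A ^ i.val := rfl

@[simp] lemma q8hom_xa (hA : A ^ 4 = 1) (hX : X ^ 2 = A ^ 2) (hc : A * X = X * A⁻¹)
    (i : ZMod (2 * 2)) : q8hom A X hA hX hc (.xa i) = X * A ^ i.val := rfl

end Q8Aux


theorem ch2 {M : Type*} [CommRing M] (A : Matrix (Fin 2) (Fin 2) M) :
    A * A = trace A • A - det A • 1 := by
  ext i j
  fin_cases i <;> fin_cases j <;>
    simp [Matrix.mul_apply, Fin.sum_univ_two, trace_fin_two, det_fin_two, Matrix.one_apply] <;>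
    ring

theorem fwd (M : Type*) [Field M] [CharZero M]
    (ρ : QuaternionGroup 2 →* GL (Fin 2) M) (hρ : Function.Injective ρ) :
    Nonempty (ℍ[M,-1,-1] ≃ₐ[M] Matrix (Fin 2) (Fin 2) M) := by
  -- group facts
  have g1 : (QuaternionGroup.a 1 : QuaternionGroup 2) ^ 4 = 1 := by decide
  have g2 : (QuaternionGroup.xa 0 : QuaternionGroup 2) ^ 2 = (QuaternionGroup.a 1) ^ 2 := by
    decide
  have g3 : (QuaternionGroup.a 1 : QuaternionGroup 2) * QuaternionGroup.xa 0 =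
      QuaternionGroup.xa 0 * (QuaternionGroup.a 1)⁻¹ := by decide
  have g4 : (QuaternionGroup.a 1 : QuaternionGroup 2) ^ 2 ≠ 1 := by decide
  set Au := ρ (QuaternionGroup.a 1) with hAu
  set Xu := ρ (QuaternionGroup.xa 0) with hXu
  set A : Matrix (Fin 2) (Fin 2) M := (Au : Matrix (Fin 2) (Fin 2) M) with hA
  set X : Matrix (Fin 2) (Fin 2) M := (Xu : Matrix (Fin 2) (Fin 2) M) with hX
  set B : Matrix (Fin 2) (Fin 2) M := ((Au⁻¹ : GL (Fin 2) M) : Matrix (Fin 2) (Fin 2) M)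
    with hB
  have hAB : A * B = 1 := by
    rw [hA, ← Units.val_mul, mul_inv_cancel]; rfl
  have hBA : B * A = 1 := by
    rw [hA, ← Units.val_mul, inv_mul_cancel]; rfl
  have hXunit : IsUnit X := ⟨Xu, rfl⟩
  have hAXunit : IsUnit (A * X) := ⟨Au * Xu, rfl⟩
  have hc : A * X = X * B := by
    have hu : Au * Xu = Xu * Au⁻¹ := by
      rw [hAu, hXu, ← _root_.map_mul, ← _root_.map_inv ρ, ← _root_.map_mul, g3]
    rw [hA, hX, hB, ← Units.val_mul, ← Units.val_mul, hu]
  have hXX : X * X = A * A := by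
    have g2' : (QuaternionGroup.xa 0 : QuaternionGroup 2) * QuaternionGroup.xa 0 =
        QuaternionGroup.a 1 * QuaternionGroup.a 1 := by decide
    have hu : Xu * Xu = Au * Au := by
      rw [hXu, hAu, ← _root_.map_mul, ← _root_.map_mul, g2']
    rw [hA, hX, ← Units.val_mul, ← Units.val_mul, hu]
  have hZ1 : A * A ≠ 1 := by
    intro h
    have hu : Au * Au = 1 := Units.ext (by simpa using h)
    exact g4 (hρ (by rw [map_pow, _root_.map_one, pow_two, ← hAu, hu]))
  -- trace and determinant
  set t : M := trace A with ht
  set d : M := det A with hd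
  have hch : A * A = t • A - d • 1 := ch2 A
  have hdB : d * det B = 1 := by rw [hd, ← det_mul, hAB, det_one]
  have htB : trace B = t := by
    have h1 : A = X * B * ((Xu⁻¹ : GL (Fin 2) M) : Matrix (Fin 2) (Fin 2) M) := by
      rw [← hc, hX, mul_assoc, ← Units.val_mul, mul_inv_cancel, Units.val_one, mul_one]
    rw [ht, h1, trace_mul_comm, ← mul_assoc, ← Units.val_mul, inv_mul_cancel, Units.val_one,
      one_mul]
  have hdeq : det B = d := by
    have h1 : A = X * B * ((Xu⁻¹ : GL (Fin 2) M) : Matrix (Fin 2) (Fin 2) M) := by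
      rw [← hc, hX, mul_assoc, ← Units.val_mul, mul_inv_cancel, Units.val_one, mul_one]
    rw [hd, h1, det_mul, det_mul, mul_comm, ← mul_assoc, ← det_mul, ← Units.val_mul,
      inv_mul_cancel, Units.val_one, det_one, one_mul]
  have hd2 : d * d = 1 := by rw [hdeq] at hdB; exact hdB
  have hABC : A * (d • (t • 1 - A)) = 1 := by
    rw [mul_smul_comm, mul_sub, mul_smul_comm, mul_one, hch, sub_sub_cancel, smul_smul, hd2,
      one_smul]
  have hBform : B = d • (t • 1 - A) := by
    calc B = B * (A * (d • (t • 1 - A))) := by rw [hABC, mul_one]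
    _ = (B * A) * (d • (t • 1 - A)) := by rw [mul_assoc]
    _ = d • (t • 1 - A) := by rw [hBA, one_mul]
  have htd : t = d * t := by
    have h' := htB
    rw [hBform, trace_smul, trace_sub, trace_smul, trace_one] at h'
    simp only [Fintype.card_fin, Nat.cast_ofNat, smul_eq_mul, ← ht] at h'
    linear_combination -h'
  obtain hd1 | hdm1 := mul_self_eq_one_iff.mp hd2
  swap
  · -- d = -1 : contradiction
    rw [hdm1] at htd
    have ht0 : t = 0 := by linear_combination ((1 : M)/2) * htd
    exact absurd (by rw [hch, ht0, hdm1]; simp) hZ1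
  by_cases ht0 : t = 0
  swap
  · -- t ≠ 0 : contradiction
    have hcomm : X * (A * A) = (A * A) * X := by
      rw [← hXX, ← mul_assoc, mul_assoc]
    rw [hch, hd1, one_smul, mul_sub, sub_mul, mul_smul_comm, smul_mul_assoc, mul_one, one_mul]
      at hcomm
    have hXA : X * A = A * X :=
      smul_right_injective _ ht0 (sub_left_inj.mp hcomm)
    have hBA2 : B = A := hXunit.mul_left_cancel (by rw [← hc, hXA])
    exact absurd (hBA2 ▸ hAB) hZ1
  -- main case : A * A = -1
  have hAA : A * A = -1 := by rw [hch, ht0, hd1]; simp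
  have hXX2 : X * X = -1 := hXX.trans hAA
  have hBnA : B = -A := by rw [hBform, hd1, ht0]; simp
  have hAXn : A * X = -(X * A) := by
    rw [hc, hBnA, mul_neg]
  have hXAn : X * A = -(A * X) := by rw [hAXn, neg_neg]
  -- auxiliary products
  have hAAX : A * (A * X) = -X := by rw [← mul_assoc, hAA, neg_one_mul]
  have hAXA : (A * X) * A = X := by
    rw [mul_assoc, hXAn, mul_neg, ← mul_assoc, hAA, neg_one_mul, neg_neg]
  -- no scalar matrices among our generators
  have hAscalar : ∀ c : M, A ≠ c • (1 : Matrix (Fin 2) (Fin 2) M) := by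
    intro c hsc
    have h1 : A * X = X * A := by
      rw [hsc, smul_mul_assoc, one_mul, mul_smul_comm, mul_one]
    have h2 : A * X = -(A * X) := h1.trans hXAn
    have h3 : (2 : M) • (A * X) = 0 := by
      rw [two_smul]
      nth_rewrite 1 [h2]
      exact neg_add_cancel _
    rcases smul_eq_zero.mp h3 with h | h
    · exact two_ne_zero h
    · exact hAXunit.ne_zero h
  -- the quaternion basis
  let b : QuaternionAlgebra.Basis (Matrix (Fin 2) (Fin 2) M) (-1 : M) 0 (-1) :=
    { i := A
      j := X
      k := A * X
      i_mul_i := by rw [hAA]; simp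
      j_mul_j := by rw [hXX2]; simp
      i_mul_j := rfl
      j_mul_i := by rw [hXAn]; simp }
  let f : ℍ[M,-1,-1] →ₐ[M] Matrix (Fin 2) (Fin 2) M := b.liftHom
  have hlift : ∀ q : ℍ[M,-1,-1],
      f q = q.re • 1 + q.imI • A + q.imJ • X + q.imK • (A * X) := by
    intro q
    show b.lift q = _
    rw [QuaternionAlgebra.Basis.lift, Algebra.algebraMap_eq_smul_one]
  have hinj : Function.Injective f := by
    rw [injective_iff_map_eq_zero]
    intro q hq
    rw [hlift] at hq
    have e1 : A * (q.re • 1 + q.imI • A + q.imJ • X + q.imK • (A * X)) +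
        (q.re • 1 + q.imI • A + q.imJ • X + q.imK • (A * X)) * A =
        (2 * q.re) • A - (2 * q.imI) • 1 := by
      simp only [mul_add, add_mul, mul_smul_comm, smul_mul_assoc, one_mul, mul_one,
        hAA, hAAX, hAXA, hXAn]
      module
    rw [hq, mul_zero, zero_mul, add_zero] at e1
    replace e1 : (2 * q.re) • A - (2 * q.imI) • (1 : Matrix (Fin 2) (Fin 2) M) = 0 := e1.symm
    have hre : q.re = 0 := by
      by_contra h
      have h2r : (2 * q.re) ≠ 0 := mul_ne_zero two_ne_zero h
      refine hAscalar ((2 * q.re)⁻¹ * (2 * q.imI)) ?_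
      have e2 : (2 * q.re) • A = (2 * q.imI) • (1 : Matrix (Fin 2) (Fin 2) M) :=
        sub_eq_zero.mp e1
      calc A = (2 * q.re)⁻¹ • ((2 * q.re) • A) := by
            rw [smul_smul, inv_mul_cancel₀ h2r, one_smul]
        _ = (2 * q.re)⁻¹ • ((2 * q.imI) • (1 : Matrix (Fin 2) (Fin 2) M)) := by rw [e2]
        _ = ((2 * q.re)⁻¹ * (2 * q.imI)) • 1 := by rw [smul_smul]
    have himI : q.imI = 0 := by
      rw [hre, mul_zero, zero_smul, zero_sub, neg_eq_zero] at e1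
      rcases smul_eq_zero.mp e1 with h | h
      · exact (mul_eq_zero.mp h).resolve_left two_ne_zero
      · exact absurd h one_ne_zero
    rw [hre, himI, zero_smul, zero_smul, zero_add, zero_add] at hq
    have e3 : (q.imJ • (1 : Matrix (Fin 2) (Fin 2) M) + q.imK • A) * X = 0 * X := by
      rw [zero_mul, add_mul, smul_mul_assoc, smul_mul_assoc, one_mul]
      exact hq
    have e4 : q.imJ • (1 : Matrix (Fin 2) (Fin 2) M) + q.imK • A = 0 :=
      hXunit.mul_right_cancel e3
    have himK : q.imK = 0 := by
      by_contra h
      refine hAscalar (q.imK⁻¹ * (-q.imJ)) ?_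
      have e5 : q.imK • A = -(q.imJ • (1 : Matrix (Fin 2) (Fin 2) M)) :=
        eq_neg_of_add_eq_zero_right e4
      calc A = q.imK⁻¹ • (q.imK • A) := by rw [smul_smul, inv_mul_cancel₀ h, one_smul]
        _ = q.imK⁻¹ • (-(q.imJ • (1 : Matrix (Fin 2) (Fin 2) M))) := by rw [e5]
        _ = (q.imK⁻¹ * (-q.imJ)) • 1 := by rw [← neg_smul, smul_smul]
    have himJ : q.imJ = 0 := by
      rw [himK, zero_smul, add_zero] at e4
      rcases smul_eq_zero.mp e4 with h | h
      · exact h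
      · exact absurd h one_ne_zero
    ext <;> simp [hre, himI, himJ, himK]
  have hfr : Module.finrank M ℍ[M,-1,-1] = Module.finrank M (Matrix (Fin 2) (Fin 2) M) := by
    rw [QuaternionAlgebra.finrank_eq_four, Module.finrank_matrix]
    simp
  have hsurj : Function.Surjective f := by
    have := (LinearMap.injective_iff_surjective_of_finrank_eq_finrank
      (f := f.toLinearMap) hfr).mp hinj
    exact this
  exact ⟨AlgEquiv.ofBijective f ⟨hinj, hsurj⟩⟩


open Q8Aux QuaternionGroup in
theorem rev (M : Type*) [Field M] [CharZero M]
    (e : ℍ[M,-1,-1] ≃ₐ[M] Matrix (Fin 2) (Fin 2) M) :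
    ∃ ρ : QuaternionGroup 2 →* GL (Fin 2) M, Function.Injective ρ := by
  haveI : NeZero (2 * 2) := ⟨by norm_num⟩
  let qi : ℍ[M,-1,-1] := ⟨0, 1, 0, 0⟩
  let qj : ℍ[M,-1,-1] := ⟨0, 0, 1, 0⟩
  let uI : ℍ[M,-1,-1]ˣ := ⟨qi, -qi, by ext <;> simp [qi], by ext <;> simp [qi]⟩
  let uJ : ℍ[M,-1,-1]ˣ := ⟨qj, -qj, by ext <;> simp [qj], by ext <;> simp [qj]⟩
  have hm1 : (-1 : M) ≠ 1 := by norm_num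
  have hA : uI ^ 4 = 1 := by
    apply Units.ext
    simp only [Units.val_pow_eq_pow_val, Units.val_one]
    ext <;> simp [uI, qi, pow_succ]
  have hX : uJ ^ 2 = uI ^ 2 := by
    apply Units.ext
    simp only [Units.val_pow_eq_pow_val]
    ext <;> simp [uI, uJ, qi, qj, pow_succ]
  have hc : uI * uJ = uJ * uI⁻¹ := by
    apply Units.ext
    show (qi * qj : ℍ[M,-1,-1]) = qj * (-qi)
    ext <;> simp [qi, qj]
  let ρ₀ := q8hom uI uJ hA hX hc
  have hρ₀ : Function.Injective ρ₀ := by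
    rw [injective_iff_map_eq_one]
    rintro (i | i) h
    · have h' : (qi ^ i.val : ℍ[M,-1,-1]) = 1 := congrArg Units.val h
      have hv : i.val < 4 := i.val_lt
      have h0 : 0 ≤ i.val := Nat.zero_le _
      rw [one_def]
      congr 1
      rw [← ZMod.val_eq_zero]
      by_contra hne
      interval_cases hi : i.val <;>
        simp_all [qi, pow_succ, QuaternionAlgebra.ext_iff]
    · have h' : (qj * qi ^ i.val : ℍ[M,-1,-1]) = 1 := congrArg Units.val h
      have hv : i.val < 4 := i.val_lt
      exfalso
      interval_cases hi : i.val <;>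
        simp_all [qi, qj, pow_succ, QuaternionAlgebra.ext_iff]
  have hmap : Function.Injective
      (Units.map (e : ℍ[M,-1,-1] →+* Matrix (Fin 2) (Fin 2) M).toMonoidHom) := by
    intro u v huv
    apply Units.ext
    apply e.injective
    simpa using congrArg Units.val huv
  exact ⟨(Units.map (e : ℍ[M,-1,-1] →+* Matrix (Fin 2) (Fin 2) M).toMonoidHom).comp ρ₀,
    hmap.comp hρ₀⟩

/-- The quaternionic (faithful degree-2) representation of the quaternion group
`Q₈` is realizable over a field `M` of characteristic zero if and only if the
quaternion algebra `(-1,-1)_M` is split, i.e. isomorphic to `M₂(M)`. -/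
theorem statement10 (M : Type*) [Field M] [CharZero M] :
    (∃ ρ : QuaternionGroup 2 →* GL (Fin 2) M, Function.Injective ρ) ↔
      Nonempty (ℍ[M,-1,-1] ≃ₐ[M] Matrix (Fin 2) (Fin 2) M) := by
  constructor
  · rintro ⟨ρ, hρ⟩
    exact fwd M ρ hρ
  · rintro ⟨e⟩
    exact rev M e
end
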